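/- Let p⃗ ∈ (0,∞]ⁿ with p₊ := max{p₁,…,pₙ} and p₋ := min{p₁,…,pₙ}, and let B_k = AᵏΔ with |B_k| = bᵏ. Then there exists a positive constant C such that for every k ∈ ℤ, ‖χ_{B_k}‖_{L^{p⃗}}^{-1} ≤ C max{ b^{-k/p₋}, b^{-k/p₊} }. -/

import Mathlib

open MeasureTheory ENNReal Set Filter Pointwise
open scoped Classical

noncomputable section

/-- One step of the iterated mixed Lebesgue norm: the `L^p(ℝ)`-norm in one real
variable, with the usual modification (essential supremum) when `p = ∞`. -/
def lpStep (p : ℝ≥0∞) (g : ℝ → ℝ≥0∞) : ℝ≥0∞ :=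
  if p = ∞ then essSup g volume
  else (∫⁻ t, (g t) ^ p.toReal) ^ (1 / p.toReal)

/-- The iterated mixed Lebesgue norm of an `ℝ≥0∞`-valued function on `ℝⁿ`:
the innermost integral is in the first variable, with exponent `p 0`. -/
def mixedNorm : (n : ℕ) → (Fin n → ℝ≥0∞) → ((Fin n → ℝ) → ℝ≥0∞) → ℝ≥0∞
  | 0, _, F => F finZeroElim
  | (n + 1), p, F =>
      mixedNorm n (fun i => p i.succ) (fun x => lpStep (p 0) (fun t => F (Fin.cons t x)))

/-- The mixed-norm Lebesgue quasi-norm `‖f‖_{L^{p⃗}}` of a real-valued function. -/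
def mixedLp {n : ℕ} (p : Fin n → ℝ≥0∞) (f : (Fin n → ℝ) → ℝ) : ℝ≥0∞ :=
  mixedNorm n p fun x => ENNReal.ofReal |f x|

/-- `A` is an expansive dilation: every (complex) eigenvalue has modulus `> 1`. -/
def IsExpansive {n : ℕ} (A : Matrix (Fin n) (Fin n) ℝ) : Prop :=
  ∀ z ∈ spectrum ℂ (A.map (algebraMap ℝ ℂ)), 1 < ‖z‖

/-- The dilated set `B_k := A^k Δ`, `k ∈ ℤ`. -/
def Bk {n : ℕ} (A : Matrix (Fin n) (Fin n) ℝ) (Δ : Set (Fin n → ℝ)) (k : ℤ) :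
    Set (Fin n → ℝ) :=
  (fun x => (A ^ k).mulVec x) '' Δ

/-- The dilated ball `x₀ + B_k`. -/
def dBall {n : ℕ} (A : Matrix (Fin n) (Fin n) ℝ) (Δ : Set (Fin n → ℝ))
    (x₀ : Fin n → ℝ) (k : ℤ) : Set (Fin n → ℝ) :=
  (fun y => x₀ + y) '' Bk A Δ k

/-- `‖χ_S‖_{L^{p⃗}}`, the mixed norm of the characteristic function of `S`. -/
def chiNorm {n : ℕ} (p : Fin n → ℝ≥0∞) (S : Set (Fin n → ℝ)) : ℝ≥0∞ :=
  mixedNorm n p (S.indicator fun _ => (1 : ℝ≥0∞))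

/-- The standing assumptions on an expansive dilation `A` and the associated
ellipsoid `Δ` (of Lebesgue measure `1`, with `Δ ⊂ rΔ ⊂ AΔ`). -/
structure IsDilationSetup {n : ℕ} (A : Matrix (Fin n) (Fin n) ℝ)
    (Δ : Set (Fin n → ℝ)) (r : ℝ) : Prop where
  expansive : IsExpansive A
  det_isUnit : IsUnit A.det
  isOpen : IsOpen Δ
  zero_mem : 0 ∈ Δ
  bounded : Bornology.IsBounded Δ
  convex : Convex ℝ Δ
  symmetric : ∀ x ∈ Δ, -x ∈ Δ
  volume_eq_one : volume Δ = 1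
  one_lt_r : 1 < r
  subset_smul : Δ ⊆ r • Δ
  smul_subset : r • Δ ⊆ (fun x => A.mulVec x) '' Δ

/-! ### Auxiliary lemmas -/

section Aux

variable {n : ℕ}

lemma cons_combo (θ σ t₁ t₂ : ℝ) (x y : Fin n → ℝ) :
    θ • (Fin.cons t₁ x : Fin (n + 1) → ℝ) + σ • (Fin.cons t₂ y : Fin (n + 1) → ℝ)
      = (Fin.cons (θ * t₁ + σ * t₂) (θ • x + σ • y) : Fin (n + 1) → ℝ) := by
  funext i
  refine Fin.cases ?_ ?_ i
  · simp [Fin.cons_zero]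
  · intro j; simp [Fin.cons_succ]

lemma neg_cons (t : ℝ) (x : Fin n → ℝ) :
    (-(Fin.cons t x : Fin (n + 1) → ℝ)) = Fin.cons (-t) (-x) := by
  funext i
  refine Fin.cases ?_ ?_ i
  · simp [Fin.cons_zero]
  · intro j; simp [Fin.cons_succ]

lemma continuous_consL (x : Fin n → ℝ) :
    Continuous fun t : ℝ => (Fin.cons t x : Fin (n + 1) → ℝ) := by
  refine continuous_pi fun i => ?_
  refine Fin.cases ?_ ?_ i
  · simpa using (continuous_id' : Continuous fun a : ℝ => a)
  · intro j; simpa using continuous_const (y := x j)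

lemma continuous_consR (t : ℝ) :
    Continuous fun x : Fin n → ℝ => (Fin.cons t x : Fin (n + 1) → ℝ) := by
  refine continuous_pi fun i => ?_
  refine Fin.cases ?_ ?_ i
  · simpa using continuous_const (y := t)
  · intro j; simpa using continuous_apply j

lemma exists_eq_Ioo {S : Set ℝ} (hO : IsOpen S) (hc : Convex ℝ S)
    (hb : Bornology.IsBounded S) (hne : S.Nonempty) :
    ∃ a b : ℝ, a < b ∧ S = Set.Ioo a b := by
  obtain ⟨hbd, hba⟩ := isBounded_iff_bddBelow_bddAbove.mp hb
  have hsub : S ⊆ Set.Ioo (sInf S) (sSup S) := by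
    intro x hx
    obtain ⟨ε, hε, hball⟩ := Metric.isOpen_iff.mp hO x hx
    have h1 : x - ε / 2 ∈ S := by
      apply hball
      rw [Metric.mem_ball, Real.dist_eq]
      have h : x - ε / 2 - x = -(ε / 2) := by ring
      rw [h, abs_neg, abs_of_nonneg (by linarith)]
      linarith
    have h2 : x + ε / 2 ∈ S := by
      apply hball
      rw [Metric.mem_ball, Real.dist_eq]
      have h : x + ε / 2 - x = ε / 2 := by ring
      rw [h, abs_of_nonneg (by linarith)]
      linarith
    constructor
    · exact lt_of_le_of_lt (csInf_le hbd h1) (by linarith)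
    · exact lt_of_lt_of_le (by linarith) (le_csSup hba h2)
  have hsup : Set.Ioo (sInf S) (sSup S) ⊆ S := by
    intro x hx
    obtain ⟨y, hyS, hyx⟩ := (csInf_lt_iff hbd hne).mp hx.1
    obtain ⟨z, hzS, hxz⟩ := (lt_csSup_iff hba hne).mp hx.2
    exact hc.ordConnected.out hyS hzS ⟨hyx.le, hxz.le⟩
  have heq : S = Set.Ioo (sInf S) (sSup S) := Subset.antisymm hsub hsup
  refine ⟨sInf S, sSup S, ?_, heq⟩
  obtain ⟨x, hx⟩ := hne
  rw [heq] at hx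
  exact lt_trans hx.1 hx.2

lemma one_le_essSup_indicator {S : Set ℝ} (hS : 0 < volume S) :
    1 ≤ essSup (S.indicator fun _ => (1 : ℝ≥0∞)) volume := by
  by_contra hlt
  push_neg at hlt
  have h := ae_lt_of_essSup_lt hlt
  rw [ae_iff] at h
  have hsub : S ⊆ {t | ¬ S.indicator (fun _ => (1 : ℝ≥0∞)) t < 1} := by
    intro t ht
    simp [Set.indicator_of_mem ht]
  exact hS.ne' (le_antisymm (le_trans (measure_mono hsub) h.le) (by simp))

lemma lpStep_mono {p : ℝ≥0∞} {g h : ℝ → ℝ≥0∞} (hgh : ∀ t, g t ≤ h t) :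
    lpStep p g ≤ lpStep p h := by
  unfold lpStep
  split_ifs
  · exact essSup_mono_ae (Filter.Eventually.of_forall hgh)
  · exact ENNReal.rpow_le_rpow
      (lintegral_mono fun t => ENNReal.rpow_le_rpow (hgh t) ENNReal.toReal_nonneg)
      (by positivity)

lemma lpStep_const_mul (p : ℝ≥0∞) (hp : p ≠ 0) (c : ℝ≥0∞) (hc : c ≠ ∞) (g : ℝ → ℝ≥0∞) :
    lpStep p (fun t => c * g t) = c * lpStep p g := by
  unfold lpStep
  split_ifs with h
  · exact ENNReal.essSup_const_mul
  · have hs : 0 < p.toReal := ENNReal.toReal_pos hp h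
    have h1 : ∀ t, (c * g t) ^ p.toReal = c ^ p.toReal * (g t) ^ p.toReal :=
      fun t => ENNReal.mul_rpow_of_nonneg _ _ hs.le
    simp only [h1]
    rw [lintegral_const_mul' _ _ (ENNReal.rpow_ne_top_of_nonneg hs.le hc),
      ENNReal.mul_rpow_of_nonneg _ _ (by positivity : (0:ℝ) ≤ 1 / p.toReal),
      ← ENNReal.rpow_mul, mul_one_div_cancel hs.ne', ENNReal.rpow_one]

lemma mixedNorm_mono : ∀ (n : ℕ) (p : Fin n → ℝ≥0∞) (F G : (Fin n → ℝ) → ℝ≥0∞),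
    (∀ x, F x ≤ G x) → mixedNorm n p F ≤ mixedNorm n p G
  | 0, _, _, _, h => h _
  | (n + 1), p, F, G, h =>
      mixedNorm_mono n _ _ _ fun x => lpStep_mono fun t => h _

lemma mixedNorm_const_mul : ∀ (n : ℕ) (p : Fin n → ℝ≥0∞), (∀ i, p i ≠ 0) →
    ∀ (c : ℝ≥0∞), c ≠ ∞ → ∀ F,
    mixedNorm n p (fun x => c * F x) = c * mixedNorm n p F
  | 0, _, _, _, _, _ => rfl
  | (n + 1), p, hp, c, hc, F => by
      show mixedNorm n _ (fun x => lpStep (p 0) fun t => c * F (Fin.cons t x)) = _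
      rw [show (fun x => lpStep (p 0) fun t => c * F (Fin.cons t x))
            = fun x => c * lpStep (p 0) (fun t => F (Fin.cons t x)) from
          funext fun x => lpStep_const_mul (p 0) (hp 0) c hc _]
      exact mixedNorm_const_mul n _ (fun i => hp _) c hc _

end Aux

/-! ### The key geometric lower bound for the mixed norm of an indicator -/

theorem mixedNorm_indicator_bound :
    ∀ (n : ℕ) (p : Fin n → ℝ≥0∞), (∀ i, p i ≠ 0) →
    ∀ (K : Set (Fin n → ℝ)), IsOpen K → Convex ℝ K → (∀ x ∈ K, -x ∈ K) →
    ∀ (ρ R : ℝ), 0 < ρ → Metric.ball 0 ρ ⊆ K → K ⊆ Metric.ball 0 R →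
    ∃ a : Fin n → ℝ,
      (∀ i, ρ / 2 ^ n ≤ a i) ∧ (∀ i, a i ≤ 2 * R) ∧
      volume K ≤ ENNReal.ofReal (2 ^ (n * n) * ∏ i, a i) ∧
      ENNReal.ofReal (∏ i, a i ^ ((p i).toReal)⁻¹)
        ≤ mixedNorm n p (K.indicator fun _ => 1) := by
  intro n
  induction n with
  | zero =>
    intro p hp K hO hc hs ρ R hρ hρK hKR
    have h0K : (0 : Fin 0 → ℝ) ∈ K := hρK (Metric.mem_ball_self hρ)
    refine ⟨fun i => i.elim0, fun i => i.elim0, fun i => i.elim0, ?_, ?_⟩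
    · have h1 : volume (univ : Set (Fin 0 → ℝ)) = 1 := by
        rw [volume_pi, Measure.pi_univ]; simp
      calc volume K ≤ volume univ := measure_mono (subset_univ K)
        _ = 1 := h1
        _ ≤ ENNReal.ofReal (2 ^ (0 * 0) * ∏ i : Fin 0, (fun i : Fin 0 => i.elim0) i) := by
            simp
    · have he : (finZeroElim : Fin 0 → ℝ) = 0 := funext fun i => i.elim0
      show ENNReal.ofReal _ ≤ (K.indicator fun _ => (1:ℝ≥0∞)) finZeroElim
      rw [he, Set.indicator_of_mem h0K]
      simp
  | succ n IH =>
    intro p hp K hO hc hs ρ R hρ hρK hKR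
    have hKmeas : MeasurableSet K := hO.measurableSet
    have hR : 0 < R := by
      have h0 := hKR (hρK (Metric.mem_ball_self hρ))
      simpa [Metric.mem_ball] using h0
    -- the central fiber
    set fb0 : Set ℝ := {t : ℝ | Fin.cons t (0 : Fin n → ℝ) ∈ K} with hfb0def
    have hcons_mem : ∀ t : ℝ, |t| < ρ → Fin.cons t (0 : Fin n → ℝ) ∈ K := by
      intro t ht
      apply hρK
      rw [mem_ball_zero_iff, pi_norm_lt_iff hρ]
      intro i
      refine Fin.cases ?_ ?_ i
      · simpa using ht
      · intro j; simpa using hρ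
    have hfb_sub : ∀ x : Fin n → ℝ, {t : ℝ | Fin.cons t x ∈ K} ⊆ Set.Ioo (-R) R := by
      intro x t ht
      have h1 := hKR ht
      rw [mem_ball_zero_iff] at h1
      have h2 : |t| < R :=
        lt_of_le_of_lt (by simpa using norm_le_pi_norm (Fin.cons t x : Fin (n + 1) → ℝ) 0) h1
      exact Set.mem_Ioo.mpr (abs_lt.mp h2)
    have hℓ_lb : ENNReal.ofReal (2 * ρ) ≤ volume fb0 := by
      have hsub : Set.Ioo (-ρ) ρ ⊆ fb0 := by
        intro t ht
        exact hcons_mem t (abs_lt.mpr ⟨ht.1, ht.2⟩)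
      calc ENNReal.ofReal (2 * ρ) = volume (Set.Ioo (-ρ) ρ) := by
            rw [Real.volume_Ioo]; congr 1; ring
        _ ≤ volume fb0 := measure_mono hsub
    have hℓ_ub : volume fb0 ≤ ENNReal.ofReal (2 * R) := by
      calc volume fb0 ≤ volume (Set.Ioo (-R) R) := measure_mono (hfb_sub 0)
        _ = ENNReal.ofReal (2 * R) := by rw [Real.volume_Ioo]; congr 1; ring
    have hℓ_top : volume fb0 ≠ ∞ := ne_top_of_le_ne_top ENNReal.ofReal_ne_top hℓ_ub
    set a0 : ℝ := (volume fb0).toReal / 2 with ha0def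
    have ha0ρ : ρ ≤ a0 := by
      have h1 := ENNReal.toReal_mono hℓ_top hℓ_lb
      rw [ENNReal.toReal_ofReal (by positivity)] at h1
      rw [ha0def]; linarith
    have ha0R : a0 ≤ R := by
      have h1 := ENNReal.toReal_mono ENNReal.ofReal_ne_top hℓ_ub
      rw [ENNReal.toReal_ofReal (by positivity)] at h1
      rw [ha0def]; linarith
    have ha0pos : 0 < a0 := lt_of_lt_of_le hρ ha0ρ
    have hvol_fb0 : volume fb0 = ENNReal.ofReal (2 * a0) := by
      rw [show 2 * a0 = (volume fb0).toReal by rw [ha0def]; ring,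
        ENNReal.ofReal_toReal hℓ_top]
    -- fibers are intervals; the central fiber is the longest
    have hfiber_open : ∀ x : Fin n → ℝ, IsOpen {t : ℝ | Fin.cons t x ∈ K} :=
      fun x => hO.preimage (continuous_consL x)
    have hfiber_conv : ∀ x : Fin n → ℝ, Convex ℝ {t : ℝ | Fin.cons t x ∈ K} := by
      intro x t1 h1 t2 h2 θ σ hθ hσ hθσ
      have hcc := hc h1 h2 hθ hσ hθσ
      rw [cons_combo] at hcc
      simpa [Convex.combo_self hθσ, smul_eq_mul] using hcc
    have hslice_le : ∀ x : Fin n → ℝ, volume {t : ℝ | Fin.cons t x ∈ K} ≤ volume fb0 := by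
      intro x
      rcases Set.eq_empty_or_nonempty {t : ℝ | Fin.cons t x ∈ K} with hemp | hne
      · rw [hemp]; simp
      · obtain ⟨a, b, hab, hIoo⟩ := exists_eq_Ioo (hfiber_open x) (hfiber_conv x)
          ((Metric.isBounded_Ioo (-R) R).subset (hfb_sub x)) hne
        have hsub2 : Set.Ioo (-((b - a) / 2)) ((b - a) / 2) ⊆ fb0 := by
          intro u hu
          obtain ⟨hu1, hu2⟩ := hu
          have ht1 : ((a + b) / 2 + u) ∈ Set.Ioo a b := by
            constructor <;> [linarith; linarith]
          have ht2 : ((a + b) / 2 - u) ∈ Set.Ioo a b := by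
            constructor <;> [linarith; linarith]
          rw [← hIoo] at ht1 ht2
          have hm1 : Fin.cons ((a + b) / 2 + u) x ∈ K := ht1
          have hm2 : Fin.cons (-((a + b) / 2 - u)) (-x) ∈ K := by
            have := hs _ ht2
            rwa [neg_cons] at this
          have hmid := hc hm1 hm2 (by norm_num : (0:ℝ) ≤ 1/2) (by norm_num : (0:ℝ) ≤ 1/2)
            (by norm_num : (1:ℝ)/2 + 1/2 = 1)
          rw [cons_combo] at hmid
          have harg1 : 1/2 * ((a + b) / 2 + u) + 1/2 * (-((a + b) / 2 - u)) = u := by ring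
          have harg2 : (1/2 : ℝ) • x + (1/2 : ℝ) • (-x) = 0 := by
            rw [smul_neg]; exact add_neg_cancel _
          rw [harg1, harg2] at hmid
          exact hmid
        calc volume {t : ℝ | Fin.cons t x ∈ K} = ENNReal.ofReal (b - a) := by
              rw [hIoo, Real.volume_Ioo]
          _ = volume (Set.Ioo (-((b - a) / 2)) ((b - a) / 2)) := by
              rw [Real.volume_Ioo]; congr 1; ring
          _ ≤ volume fb0 := measure_mono hsub2
    -- the projection and its half
    set P : Set (Fin n → ℝ) := {y | ∃ t, Fin.cons t y ∈ K} with hPdef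
    have hPopen : IsOpen P := by
      have h1 : P = ⋃ t : ℝ, (fun y : Fin n → ℝ => Fin.cons t y) ⁻¹' K := by
        ext y; simp [hPdef, Set.mem_iUnion, Set.mem_preimage]
      rw [h1]
      exact isOpen_iUnion fun t => hO.preimage (continuous_consR t)
    have hPconv : Convex ℝ P := by
      rintro y1 ⟨t1, h1⟩ y2 ⟨t2, h2⟩ θ σ hθ hσ hθσ
      exact ⟨θ * t1 + σ * t2, by rw [← cons_combo]; exact hc h1 h2 hθ hσ hθσ⟩
    have hPsub : P ⊆ Metric.ball 0 R := by
      rintro y ⟨t, ht⟩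
      have h1 := hKR ht
      rw [mem_ball_zero_iff] at h1
      rw [mem_ball_zero_iff, pi_norm_lt_iff hR]
      intro j
      calc ‖y j‖ = ‖(Fin.cons t y : Fin (n+1) → ℝ) j.succ‖ := by rw [Fin.cons_succ]
        _ ≤ ‖(Fin.cons t y : Fin (n+1) → ℝ)‖ := norm_le_pi_norm _ _
        _ < R := h1
    have hPball : Metric.ball (0 : Fin n → ℝ) ρ ⊆ P := by
      intro y hy
      rw [mem_ball_zero_iff] at hy
      refine ⟨0, hρK ?_⟩
      rw [mem_ball_zero_iff, pi_norm_lt_iff hρ]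
      intro i
      refine Fin.cases ?_ ?_ i
      · simpa using hρ
      · intro j
        rw [Fin.cons_succ]
        exact lt_of_le_of_lt (norm_le_pi_norm y j) hy
    have hK'open : IsOpen ((2⁻¹ : ℝ) • P) := hPopen.smul₀ (by norm_num)
    have hK'conv : Convex ℝ ((2⁻¹ : ℝ) • P) := hPconv.smul _
    have hK'symm : ∀ x ∈ (2⁻¹ : ℝ) • P, -x ∈ (2⁻¹ : ℝ) • P := by
      rintro - ⟨y, hy, rfl⟩
      obtain ⟨t, ht⟩ := hy
      refine ⟨-y, ⟨-t, ?_⟩, ?_⟩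
      · rw [← neg_cons]; exact hs _ ht
      · exact smul_neg _ _
    have hK'ball : Metric.ball (0 : Fin n → ℝ) (ρ / 2) ⊆ (2⁻¹ : ℝ) • P := by
      intro x hx
      rw [mem_ball_zero_iff] at hx
      refine ⟨(2 : ℝ) • x, hPball ?_, ?_⟩
      · rw [mem_ball_zero_iff, norm_smul, Real.norm_eq_abs,
          abs_of_nonneg (by norm_num : (0:ℝ) ≤ 2)]
        linarith
      · show (2⁻¹:ℝ) • ((2:ℝ) • x) = x
        rw [← mul_smul]; norm_num
    have hK'sub : (2⁻¹ : ℝ) • P ⊆ Metric.ball 0 R := by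
      rintro - ⟨y, hy, rfl⟩
      have h1 := hPsub hy
      rw [mem_ball_zero_iff] at h1 ⊢
      rw [norm_smul, Real.norm_eq_abs, abs_of_nonneg (by norm_num : (0:ℝ) ≤ 2⁻¹)]
      have := norm_nonneg y
      linarith
    -- the lower bound on half-projection fibers
    have hslice_ge : ∀ x ∈ (2⁻¹ : ℝ) • P,
        ENNReal.ofReal a0 ≤ volume {t : ℝ | Fin.cons t x ∈ K} := by
      rintro - ⟨y, hy, rfl⟩
      obtain ⟨t0, ht0⟩ := hy
      have hsub : (fun u => 2⁻¹ * t0 + 2⁻¹ * u) '' fb0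
          ⊆ {t : ℝ | Fin.cons t ((2⁻¹ : ℝ) • y) ∈ K} := by
        rintro - ⟨u, hu, rfl⟩
        have hcc := hc ht0 hu (by norm_num : (0:ℝ) ≤ 2⁻¹) (by norm_num : (0:ℝ) ≤ 2⁻¹)
          (by norm_num : (2⁻¹:ℝ) + 2⁻¹ = 1)
        rw [cons_combo] at hcc
        simpa [smul_zero, smul_eq_mul] using hcc
      have h1 : (fun u => 2⁻¹ * t0 + 2⁻¹ * u) '' fb0
          = (2⁻¹ * t0) +ᵥ ((2⁻¹ : ℝ) • fb0) := by
        ext z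
        constructor
        · rintro ⟨u, hu, rfl⟩
          exact ⟨2⁻¹ * u, Set.smul_mem_smul_set hu, rfl⟩
        · rintro ⟨w, ⟨u, hu, rfl⟩, rfl⟩
          exact ⟨u, hu, rfl⟩
      have himg : volume ((fun u => 2⁻¹ * t0 + 2⁻¹ * u) '' fb0)
          = ENNReal.ofReal 2⁻¹ * volume fb0 := by
        rw [h1, measure_vadd, Measure.addHaar_smul_of_nonneg volume
          (by norm_num : (0:ℝ) ≤ 2⁻¹) fb0]
        norm_num
      calc ENNReal.ofReal a0 = ENNReal.ofReal 2⁻¹ * ENNReal.ofReal (2 * a0) := by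
            rw [← ENNReal.ofReal_mul (by norm_num)]; congr 1; ring
        _ = ENNReal.ofReal 2⁻¹ * volume fb0 := by rw [hvol_fb0]
        _ = volume ((fun u => 2⁻¹ * t0 + 2⁻¹ * u) '' fb0) := himg.symm
        _ ≤ volume {t : ℝ | Fin.cons t ((2⁻¹ : ℝ) • y) ∈ K} := measure_mono hsub
    -- volume of the projection
    have hfinrank : Module.finrank ℝ (Fin n → ℝ) = n := by
      rw [Module.finrank_pi]; simp
    have hvolP : volume P = ENNReal.ofReal (2 ^ n) * volume ((2⁻¹ : ℝ) • P) := by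
      rw [Measure.addHaar_smul_of_nonneg volume (by norm_num : (0:ℝ) ≤ 2⁻¹) P, hfinrank,
        ← mul_assoc, ← ENNReal.ofReal_mul (by positivity)]
      rw [show (2:ℝ) ^ n * 2⁻¹ ^ n = 1 by
        rw [← mul_pow]; norm_num]
      simp
    -- Fubini
    have hFub : volume K = ∫⁻ y : Fin n → ℝ, volume {t : ℝ | Fin.cons t y ∈ K} := by
      have hmp := (volume_preserving_piFinSuccAbove (fun _ : Fin (n + 1) => ℝ) 0).symm
      have hsymm_apply : ∀ (t : ℝ) (y : Fin n → ℝ),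
          (MeasurableEquiv.piFinSuccAbove (fun _ : Fin (n + 1) => ℝ) 0).symm (t, y)
            = Fin.cons t y := by
        intro t y
        show (Fin.insertNthEquiv (fun _ : Fin (n + 1) => ℝ) 0) (t, y) = Fin.cons t y
        simp [Fin.insertNthEquiv, Fin.insertNth_zero']
      rw [← hmp.measure_preimage hKmeas.nullMeasurableSet]
      rw [Measure.volume_eq_prod, Measure.prod_apply_symm
        ((MeasurableEquiv.piFinSuccAbove (fun _ : Fin (n + 1) => ℝ) 0).symm.measurable hKmeas)]
      congr 1
      funext y
      congr 1
      ext t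
      simp only [Set.mem_preimage, hsymm_apply, Set.mem_setOf_eq]
    have hvolK_le : volume K ≤ volume fb0 * volume P := by
      rw [hFub]
      calc (∫⁻ y : Fin n → ℝ, volume {t : ℝ | Fin.cons t y ∈ K})
          ≤ ∫⁻ y : Fin n → ℝ, P.indicator (fun _ => volume fb0) y := by
            apply lintegral_mono
            intro y
            by_cases hy : y ∈ P
            · rw [Set.indicator_of_mem hy]; exact hslice_le y
            · rw [Set.indicator_of_notMem hy]
              have hemp : {t : ℝ | Fin.cons t y ∈ K} = ∅ := by
                ext t
                simp only [Set.mem_setOf_eq, Set.mem_empty_iff_false, iff_false]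
                exact fun ht => hy ⟨t, ht⟩
              simp [hemp]
        _ = volume fb0 * volume P := lintegral_indicator_const hPopen.measurableSet _
    -- the pointwise bound on lpStep
    have hpoint : ∀ x : Fin n → ℝ,
        ENNReal.ofReal (a0 ^ ((p 0).toReal)⁻¹)
            * ((2⁻¹ : ℝ) • P).indicator (fun _ => (1:ℝ≥0∞)) x
          ≤ lpStep (p 0) fun t => K.indicator (fun _ => (1:ℝ≥0∞)) (Fin.cons t x) := by
      intro x
      by_cases hx : x ∈ (2⁻¹ : ℝ) • P
      · rw [Set.indicator_of_mem hx, mul_one]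
        have hind : (fun t => K.indicator (fun _ => (1:ℝ≥0∞)) (Fin.cons t x))
            = ({t : ℝ | Fin.cons t x ∈ K}).indicator (fun _ => (1:ℝ≥0∞)) := by
          funext t
          show K.indicator (fun _ => (1:ℝ≥0∞)) (Fin.cons t x)
              = ({s : ℝ | Fin.cons s x ∈ K}).indicator (fun _ => (1:ℝ≥0∞)) t
          by_cases hmem : Fin.cons t x ∈ K
          · rw [Set.indicator_of_mem hmem,
              Set.indicator_of_mem (show t ∈ {s : ℝ | Fin.cons s x ∈ K} from hmem)]
          · rw [Set.indicator_of_notMem hmem,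
              Set.indicator_of_notMem (show t ∉ {s : ℝ | Fin.cons s x ∈ K} from hmem)]
        rw [hind]
        have hge := hslice_ge x hx
        rcases eq_or_ne (p 0) ∞ with hp0 | hp0
        · have hpos : 0 < volume {t : ℝ | Fin.cons t x ∈ K} :=
            lt_of_lt_of_le (ENNReal.ofReal_pos.mpr ha0pos) hge
          rw [lpStep, if_pos hp0, hp0]
          simpa [ENNReal.toReal_top, Real.rpow_zero] using one_le_essSup_indicator hpos
        · have hs0 : 0 < (p 0).toReal := ENNReal.toReal_pos (hp 0) hp0
          rw [lpStep, if_neg hp0]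
          have hpow : ∀ t, ({t : ℝ | Fin.cons t x ∈ K}.indicator
              (fun _ => (1:ℝ≥0∞)) t) ^ (p 0).toReal
              = {t : ℝ | Fin.cons t x ∈ K}.indicator (fun _ => (1:ℝ≥0∞)) t := by
            intro t
            by_cases hmem : t ∈ {t : ℝ | Fin.cons t x ∈ K}
            · simp [Set.indicator_of_mem hmem]
            · simp [Set.indicator_of_notMem hmem, ENNReal.zero_rpow_of_pos hs0]
          simp only [hpow]
          rw [lintegral_indicator_const ((hfiber_open x).measurableSet) 1, one_mul]
          calc ENNReal.ofReal (a0 ^ ((p 0).toReal)⁻¹)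
              = ENNReal.ofReal a0 ^ (1 / (p 0).toReal) := by
                rw [ENNReal.ofReal_rpow_of_nonneg ha0pos.le (by positivity : (0:ℝ) ≤ 1 / (p 0).toReal),
                  one_div]
            _ ≤ volume {t : ℝ | Fin.cons t x ∈ K} ^ (1 / (p 0).toReal) :=
                ENNReal.rpow_le_rpow hge (by positivity)
      · rw [Set.indicator_of_notMem hx, mul_zero]
        simp
    -- apply the induction hypothesis
    obtain ⟨a', ha1', ha2', ha3', ha4'⟩ :=
      IH (fun i => p i.succ) (fun i => hp _) ((2⁻¹ : ℝ) • P) hK'open hK'conv hK'symm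
        (ρ / 2) R (by positivity) hK'ball hK'sub
    have ha'pos : ∀ i, 0 < a' i := fun i => lt_of_lt_of_le (by positivity) (ha1' i)
    refine ⟨Fin.cons a0 a', ?_, ?_, ?_, ?_⟩
    · intro i
      refine Fin.cases ?_ ?_ i
      · rw [Fin.cons_zero]
        calc ρ / 2 ^ (n + 1) ≤ ρ := by
              apply div_le_self hρ.le
              exact one_le_pow₀ one_le_two
          _ ≤ a0 := ha0ρ
      · intro j
        rw [Fin.cons_succ]
        have h1 := ha1' j
        rwa [show ρ / 2 / 2 ^ n = ρ / 2 ^ (n + 1) by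
          rw [div_div, ← pow_succ']] at h1
    · intro i
      refine Fin.cases ?_ ?_ i
      · rw [Fin.cons_zero]; linarith
      · intro j
        rw [Fin.cons_succ]; exact ha2' j
    · have hprodnn : (0:ℝ) ≤ ∏ i, a' i :=
        Finset.prod_nonneg fun i _ => (ha'pos i).le
      have h2pow : (2:ℝ) * 2 ^ n * 2 ^ (n * n) ≤ 2 ^ ((n + 1) * (n + 1)) := by
        rw [show (2:ℝ) * 2 ^ n * 2 ^ (n * n) = 2 ^ (1 + n + n * n) by
          rw [pow_add, pow_add, pow_one]]
        apply pow_le_pow_right₀ one_le_two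
        nlinarith
      calc volume K ≤ volume fb0 * volume P := hvolK_le
        _ = ENNReal.ofReal (2 * a0) * (ENNReal.ofReal (2 ^ n) * volume ((2⁻¹:ℝ) • P)) := by
            rw [hvol_fb0, hvolP]
        _ ≤ ENNReal.ofReal (2 * a0) * (ENNReal.ofReal (2 ^ n)
              * ENNReal.ofReal (2 ^ (n * n) * ∏ i, a' i)) :=
            mul_le_mul_right (mul_le_mul_right ha3' _) _
        _ = ENNReal.ofReal ((2 * a0) * (2 ^ n * (2 ^ (n * n) * ∏ i, a' i))) := by
            rw [← ENNReal.ofReal_mul (by positivity), ← ENNReal.ofReal_mul (by positivity)]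
        _ ≤ ENNReal.ofReal (2 ^ ((n + 1) * (n + 1))
              * ∏ i, (Fin.cons a0 a' : Fin (n + 1) → ℝ) i) := by
            apply ENNReal.ofReal_le_ofReal
            rw [Fin.prod_univ_succ]
            simp only [Fin.cons_zero, Fin.cons_succ]
            calc (2 * a0) * (2 ^ n * (2 ^ (n * n) * ∏ i, a' i))
                = (2 * 2 ^ n * 2 ^ (n * n)) * (a0 * ∏ i, a' i) := by ring
              _ ≤ 2 ^ ((n + 1) * (n + 1)) * (a0 * ∏ i, a' i) :=
                  mul_le_mul_of_nonneg_right h2pow (mul_nonneg ha0pos.le hprodnn)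
    · show ENNReal.ofReal _ ≤ mixedNorm n (fun i => p i.succ)
        (fun x => lpStep (p 0) fun t => (K.indicator fun _ => (1:ℝ≥0∞)) (Fin.cons t x))
      have hmono := mixedNorm_mono n (fun i => p i.succ)
        (fun x => ENNReal.ofReal (a0 ^ ((p 0).toReal)⁻¹)
          * ((2⁻¹ : ℝ) • P).indicator (fun _ => (1:ℝ≥0∞)) x)
        (fun x => lpStep (p 0) fun t => (K.indicator fun _ => (1:ℝ≥0∞)) (Fin.cons t x))
        hpoint
      refine le_trans ?_ hmono
      rw [mixedNorm_const_mul n _ (fun i => hp _) _ ENNReal.ofReal_ne_top]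
      calc ENNReal.ofReal (∏ i, (Fin.cons a0 a' : Fin (n + 1) → ℝ) i ^ ((p i).toReal)⁻¹)
          = ENNReal.ofReal (a0 ^ ((p 0).toReal)⁻¹
              * ∏ i : Fin n, a' i ^ ((p i.succ).toReal)⁻¹) := by
            rw [Fin.prod_univ_succ]
            simp only [Fin.cons_zero, Fin.cons_succ]
        _ = ENNReal.ofReal (a0 ^ ((p 0).toReal)⁻¹)
              * ENNReal.ofReal (∏ i : Fin n, a' i ^ ((p i.succ).toReal)⁻¹) :=
            ENNReal.ofReal_mul (by positivity)
        _ ≤ ENNReal.ofReal (a0 ^ ((p 0).toReal)⁻¹)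
              * mixedNorm n (fun i => p i.succ) (((2⁻¹:ℝ) • P).indicator fun _ => 1) :=
            mul_le_mul_right ha4' _

/-! ### Matrix and `Bk` lemmas -/

section BkLemmas

variable {n : ℕ}

lemma abs_zpow_real (x : ℝ) (k : ℤ) : |x ^ k| = |x| ^ k := by
  rcases k with m | m
  · simp [zpow_natCast, abs_pow]
  · simp [zpow_negSucc, abs_inv, abs_pow]

lemma det_zpow_eq (A : Matrix (Fin n) (Fin n) ℝ) (k : ℤ) :
    (A ^ k).det = A.det ^ k := by
  cases k with
  | ofNat m => simp [zpow_natCast, Matrix.det_pow]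
  | negSucc m =>
      rw [zpow_negSucc, Matrix.det_nonsing_inv, Matrix.det_pow, zpow_negSucc,
        Ring.inverse_eq_inv]

lemma continuous_mulVec (M : Matrix (Fin n) (Fin n) ℝ) :
    Continuous fun x : Fin n → ℝ => M.mulVec x := by
  have h : (fun x : Fin n → ℝ => M.mulVec x) = ⇑(Matrix.mulVecLin M) := rfl
  rw [h]
  exact LinearMap.continuous_of_finiteDimensional _

lemma Bk_zero (A : Matrix (Fin n) (Fin n) ℝ) (Δ : Set (Fin n → ℝ)) :
    Bk A Δ 0 = Δ := by
  simp [Bk, Matrix.one_mulVec]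

lemma Bk_succ {A : Matrix (Fin n) (Fin n) ℝ} (hA : IsUnit A.det)
    (Δ : Set (Fin n → ℝ)) (j : ℤ) :
    Bk A Δ (j + 1) = (fun x => (A ^ j).mulVec x) '' ((fun x => A.mulVec x) '' Δ) := by
  rw [Bk, Matrix.zpow_add_one hA j, ← Set.image_comp]
  congr 1
  funext x
  simp [Function.comp, Matrix.mulVec_mulVec]

lemma Bk_mono_step {A : Matrix (Fin n) (Fin n) ℝ} (hA : IsUnit A.det)
    {Δ : Set (Fin n → ℝ)} (hΔ : Δ ⊆ (fun x => A.mulVec x) '' Δ) (j : ℤ) :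
    Bk A Δ j ⊆ Bk A Δ (j + 1) := by
  rw [Bk_succ hA Δ j]
  exact Set.image_mono hΔ

lemma Bk_mono {A : Matrix (Fin n) (Fin n) ℝ} (hA : IsUnit A.det)
    {Δ : Set (Fin n → ℝ)} (hΔ : Δ ⊆ (fun x => A.mulVec x) '' Δ) (j : ℤ) :
    ∀ (m : ℕ), Bk A Δ j ⊆ Bk A Δ (j + m)
  | 0 => by simp
  | (m + 1) => by
      have h1 := Bk_mono hA hΔ j m
      have h2 := Bk_mono_step hA hΔ (j + m)
      have h3 : (j + (m + 1 : ℕ) : ℤ) = (j + m) + 1 := by push_cast; ring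
      rw [h3]
      exact h1.trans h2

lemma Bk_volume {A : Matrix (Fin n) (Fin n) ℝ} (hA : IsUnit A.det)
    {Δ : Set (Fin n → ℝ)} (hΔ : volume Δ = 1) (k : ℤ) :
    volume (Bk A Δ k) = ENNReal.ofReal (|A.det| ^ k) := by
  have h1 : Bk A Δ k = ⇑(Matrix.toLin' (A ^ k)) '' Δ := by
    simp only [Bk]
    congr 1
  rw [h1, Measure.addHaar_image_linearMap, LinearMap.det_toLin', det_zpow_eq, hΔ, mul_one,
    abs_zpow_real]

lemma Bk_isOpen {A : Matrix (Fin n) (Fin n) ℝ} (hA : IsUnit A.det)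
    {Δ : Set (Fin n → ℝ)} (hΔ : IsOpen Δ) (k : ℤ) :
    IsOpen (Bk A Δ k) := by
  have hAk : IsUnit (A ^ k).det := hA.det_zpow k
  have himg : Bk A Δ k = (fun x => ((A ^ k)⁻¹).mulVec x) ⁻¹' Δ := by
    ext x
    constructor
    · rintro ⟨y, hy, rfl⟩
      simpa [Matrix.mulVec_mulVec, Matrix.nonsing_inv_mul _ hAk, Matrix.one_mulVec] using hy
    · intro hx
      exact ⟨_, hx, by simp [Matrix.mulVec_mulVec, Matrix.mul_nonsing_inv _ hAk,
        Matrix.one_mulVec]⟩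
  rw [himg]
  exact hΔ.preimage (continuous_mulVec _)

end BkLemmas

/-- There is `C > 0` such that for every `k ∈ ℤ`,
`‖χ_{B_k}‖_{L^{p⃗}}⁻¹ ≤ C max{ b^{-k/p₋}, b^{-k/p₊} }`. -/
theorem chiNorm_inv_le {n : ℕ} (hn : 0 < n)
    (A : Matrix (Fin n) (Fin n) ℝ) (Δ : Set (Fin n → ℝ)) (r : ℝ)
    (h : IsDilationSetup A Δ r) (p : Fin n → ℝ≥0∞) (hp : ∀ i, 0 < p i) :
    ∃ C : ℝ, 0 < C ∧ ∀ k : ℤ,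
      (chiNorm p (Bk A Δ k))⁻¹ ≤
        ENNReal.ofReal (C * max (|A.det| ^ (-(k : ℝ) / (⨅ i, p i).toReal))
          (|A.det| ^ (-(k : ℝ) / (⨆ i, p i).toReal))) := by
  have hd := h.det_isUnit
  have hbpos : 0 < |A.det| := abs_pos.mpr hd.ne_zero
  set b : ℝ := |A.det| with hbdef
  have hΔA : Δ ⊆ (fun x => A.mulVec x) '' Δ := h.subset_smul.trans h.smul_subset
  -- geometry of Δ
  obtain ⟨ρ₀, hρ₀, hρ₀Δ⟩ := Metric.isOpen_iff.mp h.isOpen 0 h.zero_mem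
  obtain ⟨R₁, hR₁⟩ := h.bounded.subset_ball 0
  set R₀ : ℝ := max R₁ 1 with hR₀def
  have hR₀ : 0 < R₀ := lt_of_lt_of_le one_pos (le_max_right _ _)
  have hΔR₀ : Δ ⊆ Metric.ball 0 R₀ := hR₁.trans (Metric.ball_subset_ball (le_max_left _ _))
  -- exponents
  have hnem : Nonempty (Fin n) := ⟨⟨0, hn⟩⟩
  obtain ⟨imax, himax⟩ := Finite.exists_max p
  obtain ⟨imin, himin⟩ := Finite.exists_min p
  have hsup : (⨆ i, p i) = p imax := le_antisymm (iSup_le himax) (le_iSup p imax)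
  have hinf : (⨅ i, p i) = p imin := le_antisymm (iInf_le p imin) (le_iInf himin)
  set u : ℝ := ((⨆ i, p i).toReal)⁻¹ with hu
  set v : ℝ := ((⨅ i, p i).toReal)⁻¹ with hv
  have hu0 : 0 ≤ u := inv_nonneg.mpr ENNReal.toReal_nonneg
  have hv0 : 0 ≤ v := inv_nonneg.mpr ENNReal.toReal_nonneg
  have htu : ∀ i, u ≤ ((p i).toReal)⁻¹ := by
    intro i
    rcases eq_or_ne (p i) ∞ with hpi | hpi
    · have hsup' : (⨆ j, p j) = ∞ := top_le_iff.mp (hpi ▸ le_iSup p i)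
      simp [hu, hsup', hpi]
    · rcases eq_or_ne (⨆ j, p j) ∞ with hsup' | hsup'
      · rw [hu, hsup']
        simp only [ENNReal.toReal_top, _root_.inv_zero]
        exact inv_nonneg.mpr ENNReal.toReal_nonneg
      · have h1 : (p i).toReal ≤ (⨆ j, p j).toReal :=
          ENNReal.toReal_mono hsup' (le_iSup p i)
        have h2 : 0 < (p i).toReal := ENNReal.toReal_pos (hp i).ne' hpi
        exact inv_anti₀ h2 h1
  have htv : ∀ i, ((p i).toReal)⁻¹ ≤ v := by
    intro i
    rcases eq_or_ne (p i) ∞ with hpi | hpi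
    · simp only [hpi, ENNReal.toReal_top, _root_.inv_zero]
      exact hv0
    · have hinf_ne : (⨅ j, p j) ≠ ∞ := by
        rw [hinf]
        intro hcon
        exact hpi (top_le_iff.mp (hcon ▸ himin i))
      have h1 : (⨅ j, p j).toReal ≤ (p i).toReal :=
        ENNReal.toReal_mono hpi (iInf_le p i)
      have h2 : 0 < (⨅ j, p j).toReal :=
        ENNReal.toReal_pos (by rw [hinf]; exact (hp imin).ne') hinf_ne
      exact inv_anti₀ h2 h1
  -- constants
  set D : ℝ := max (2 * R₀) 1 with hD
  have hD1 : 1 ≤ D := le_max_right _ _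
  have hDpos : 0 < D := lt_of_lt_of_le one_pos hD1
  set ρ' : ℝ := min (ρ₀ / 2 ^ n) 1 with hρ'
  have hρ'pos : 0 < ρ' := lt_min (by positivity) one_pos
  have hρ'le1 : ρ' ≤ 1 := min_le_right _ _
  set cP : ℝ := (ρ' ^ v) ^ n * ((2:ℝ) ^ (n * n))⁻¹ ^ u with hcP
  set cN : ℝ := (((2:ℝ) ^ (n * n) * D ^ n)⁻¹) ^ v with hcN
  have hcPpos : 0 < cP := by rw [hcP]; positivity
  have hcNpos : 0 < cN := by rw [hcN]; positivity
  set C : ℝ := max cP⁻¹ cN⁻¹ with hC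
  have hCpos : 0 < C := lt_of_lt_of_le (by positivity) (le_max_left _ _)
  refine ⟨C, hCpos, ?_⟩
  intro k
  -- general inversion step
  have hchi : ∀ (c w : ℝ), 0 < c →
      ENNReal.ofReal (c * b ^ ((k:ℝ) * w)) ≤ chiNorm p (Bk A Δ k) →
      (chiNorm p (Bk A Δ k))⁻¹ ≤ ENNReal.ofReal (c⁻¹ * b ^ (-(k:ℝ) * w)) := by
    intro c w hc hle
    have h1 := ENNReal.inv_le_inv' hle
    rwa [← ENNReal.ofReal_inv_of_pos (mul_pos hc (Real.rpow_pos_of_pos hbpos _)), mul_inv,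
      ← Real.rpow_neg hbpos.le, ← neg_mul] at h1
  -- properties of B_k
  have hBopen : IsOpen (Bk A Δ k) := Bk_isOpen hd h.isOpen k
  have hBconv : Convex ℝ (Bk A Δ k) := by
    have h1 := h.convex.linear_image (Matrix.mulVecLin (A ^ k))
    have h2 : ⇑(Matrix.mulVecLin (A ^ k)) = fun x => (A ^ k).mulVec x := rfl
    rw [h2] at h1
    exact h1
  have hBsymm : ∀ x ∈ Bk A Δ k, -x ∈ Bk A Δ k := by
    rintro - ⟨y, hy, rfl⟩
    exact ⟨-y, h.symmetric y hy, by simp [Matrix.mulVec_neg]⟩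
  have hBbdd : Bornology.IsBounded (Bk A Δ k) := by
    have hl := (LinearMap.toContinuousLinearMap (Matrix.mulVecLin (A ^ k))).lipschitz
    have h1 := hl.isBounded_image h.bounded
    have h2 : ⇑(LinearMap.toContinuousLinearMap (Matrix.mulVecLin (A ^ k)))
        = fun x => (A ^ k).mulVec x := by
      funext x
      simp [LinearMap.coe_toContinuousLinearMap']
    rwa [h2] at h1
  have hB0mem : (0 : Fin n → ℝ) ∈ Bk A Δ k :=
    ⟨0, h.zero_mem, Matrix.mulVec_zero _⟩
  rcases le_or_gt 0 k with hk | hk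
  · -- k ≥ 0 : use Δ ⊆ B_k
    have hBsub : Δ ⊆ Bk A Δ k := by
      have h1 := Bk_mono hd hΔA 0 k.toNat
      rw [Bk_zero] at h1
      rwa [show ((0:ℤ) + (k.toNat : ℤ)) = k by simp [Int.toNat_of_nonneg hk]] at h1
    obtain ⟨R₂, hR₂⟩ := hBbdd.subset_ball 0
    have hRk : Bk A Δ k ⊆ Metric.ball 0 (max R₂ 1) :=
      hR₂.trans (Metric.ball_subset_ball (le_max_left _ _))
    obtain ⟨a, ha1, _, ha3, ha4⟩ := mixedNorm_indicator_bound n p (fun i => (hp i).ne')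
      (Bk A Δ k) hBopen hBconv hBsymm ρ₀ (max R₂ 1) hρ₀ (hρ₀Δ.trans hBsub) hRk
    have hapos : ∀ i, 0 < a i := fun i => lt_of_lt_of_le (by positivity) (ha1 i)
    have haρ' : ∀ i, ρ' ≤ a i := fun i => le_trans (min_le_left _ _) (ha1 i)
    have hprod_lb : b ^ k / 2 ^ (n * n) ≤ ∏ i, a i := by
      have h1 : ENNReal.ofReal (b ^ k) ≤ ENNReal.ofReal (2 ^ (n * n) * ∏ i, a i) := by
        rw [← Bk_volume hd h.volume_eq_one k]
        exact ha3
      have h2 := (ENNReal.ofReal_le_ofReal_iff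
        (mul_nonneg (by positivity) (Finset.prod_nonneg fun i _ => (hapos i).le))).mp h1
      rw [div_le_iff₀ (by positivity : (0:ℝ) < 2 ^ (n * n))]
      linarith
    have htnn : ∀ i : Fin n, (0:ℝ) ≤ ((p i).toReal)⁻¹ :=
      fun i => inv_nonneg.mpr ENNReal.toReal_nonneg
    have hfac : ∀ i, ρ' ^ v * a i ^ u ≤ a i ^ ((p i).toReal)⁻¹ := by
      intro i
      rcases le_or_gt 1 (a i) with hai | hai
      · have h1 : a i ^ u ≤ a i ^ ((p i).toReal)⁻¹ :=
          Real.rpow_le_rpow_of_exponent_le hai (htu i)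
        have h2 : ρ' ^ v ≤ 1 := Real.rpow_le_one hρ'pos.le hρ'le1 hv0
        calc ρ' ^ v * a i ^ u ≤ 1 * (a i ^ ((p i).toReal)⁻¹) :=
              mul_le_mul h2 h1 (Real.rpow_nonneg (hapos i).le u) one_pos.le
          _ = a i ^ ((p i).toReal)⁻¹ := one_mul _
      · have h1 : a i ^ u ≤ 1 := Real.rpow_le_one (hapos i).le hai.le hu0
        have h2 : ρ' ^ v ≤ a i ^ ((p i).toReal)⁻¹ := by
          calc ρ' ^ v ≤ ρ' ^ ((p i).toReal)⁻¹ :=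
                Real.rpow_le_rpow_of_exponent_ge hρ'pos hρ'le1 (htv i)
            _ ≤ a i ^ ((p i).toReal)⁻¹ :=
                Real.rpow_le_rpow hρ'pos.le (haρ' i) (htnn i)
        calc ρ' ^ v * a i ^ u ≤ (a i ^ ((p i).toReal)⁻¹) * 1 :=
              mul_le_mul h2 h1 (Real.rpow_nonneg (hapos i).le u)
                (Real.rpow_nonneg (hapos i).le _)
          _ = a i ^ ((p i).toReal)⁻¹ := mul_one _
    have hchain : cP * b ^ ((k:ℝ) * u) ≤ ∏ i, a i ^ ((p i).toReal)⁻¹ := by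
      have h1 : ∏ i, (ρ' ^ v * a i ^ u) ≤ ∏ i, a i ^ ((p i).toReal)⁻¹ :=
        Finset.prod_le_prod (fun i _ => mul_nonneg (Real.rpow_nonneg hρ'pos.le v)
          (Real.rpow_nonneg (hapos i).le u)) (fun i _ => hfac i)
      have h2 : ∏ i, (ρ' ^ v * a i ^ u) = (ρ' ^ v) ^ n * (∏ i, a i) ^ u := by
        rw [Finset.prod_mul_distrib, Finset.prod_const,
          Real.finset_prod_rpow _ _ (fun i _ => (hapos i).le)]
        simp [Finset.card_univ]
      have h3 : ((b ^ k / 2 ^ (n * n) : ℝ)) ^ u ≤ (∏ i, a i) ^ u :=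
        Real.rpow_le_rpow (div_nonneg (zpow_pos hbpos k).le (by positivity)) hprod_lb hu0
      have h4 : ((b ^ k / 2 ^ (n * n) : ℝ)) ^ u
          = ((2:ℝ) ^ (n * n))⁻¹ ^ u * b ^ ((k:ℝ) * u) := by
        rw [div_eq_mul_inv, Real.mul_rpow (zpow_pos hbpos k).le (by positivity),
          ← Real.rpow_intCast b k, ← Real.rpow_mul hbpos.le]
        ring
      calc cP * b ^ ((k:ℝ) * u)
          = (ρ' ^ v) ^ n * (((2:ℝ) ^ (n * n))⁻¹ ^ u * b ^ ((k:ℝ) * u)) := by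
            rw [hcP]; ring
        _ ≤ (ρ' ^ v) ^ n * (∏ i, a i) ^ u := by
            apply mul_le_mul_of_nonneg_left _ (pow_nonneg (Real.rpow_nonneg hρ'pos.le v) n)
            rw [← h4]; exact h3
        _ = ∏ i, (ρ' ^ v * a i ^ u) := h2.symm
        _ ≤ ∏ i, a i ^ ((p i).toReal)⁻¹ := h1
    have hlow : ENNReal.ofReal (cP * b ^ ((k:ℝ) * u)) ≤ chiNorm p (Bk A Δ k) :=
      le_trans (ENNReal.ofReal_le_ofReal hchain) ha4
    refine le_trans (hchi cP u hcPpos hlow) ?_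
    apply ENNReal.ofReal_le_ofReal
    have hx : b ^ (-(k:ℝ) * u) ≤ max (b ^ (-(k:ℝ) / (⨅ i, p i).toReal))
        (b ^ (-(k:ℝ) / (⨆ i, p i).toReal)) := by
      apply le_max_of_le_right
      rw [div_eq_mul_inv]
    exact mul_le_mul (le_max_left _ _) hx (Real.rpow_nonneg hbpos.le _) hCpos.le
  · -- k < 0 : use B_k ⊆ Δ
    have hBsub : Bk A Δ k ⊆ Δ := by
      have h1 := Bk_mono hd hΔA k (-k).toNat
      rwa [show (k + ((-k).toNat : ℤ)) = 0 by
        simp [Int.toNat_of_nonneg (neg_nonneg.mpr hk.le)], Bk_zero] at h1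
    obtain ⟨ρk, hρk, hρkB⟩ := Metric.isOpen_iff.mp hBopen 0 hB0mem
    obtain ⟨a, ha1, ha2, ha3, ha4⟩ := mixedNorm_indicator_bound n p (fun i => (hp i).ne')
      (Bk A Δ k) hBopen hBconv hBsymm ρk R₀ hρk hρkB (hBsub.trans hΔR₀)
    have hapos : ∀ i, 0 < a i := fun i => lt_of_lt_of_le (by positivity) (ha1 i)
    have haD : ∀ i, a i ≤ D := fun i => le_trans (ha2 i) (le_max_left _ _)
    have hprod_lb : b ^ k / 2 ^ (n * n) ≤ ∏ i, a i := by
      have h1 : ENNReal.ofReal (b ^ k) ≤ ENNReal.ofReal (2 ^ (n * n) * ∏ i, a i) := by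
        rw [← Bk_volume hd h.volume_eq_one k]
        exact ha3
      have h2 := (ENNReal.ofReal_le_ofReal_iff
        (mul_nonneg (by positivity) (Finset.prod_nonneg fun i _ => (hapos i).le))).mp h1
      rw [div_le_iff₀ (by positivity : (0:ℝ) < 2 ^ (n * n))]
      linarith
    have htnn : ∀ i : Fin n, (0:ℝ) ≤ ((p i).toReal)⁻¹ :=
      fun i => inv_nonneg.mpr ENNReal.toReal_nonneg
    have hfac : ∀ i, (a i / D) ^ v ≤ a i ^ ((p i).toReal)⁻¹ := by
      intro i
      have haiD : a i / D ≤ 1 := by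
        rw [div_le_one hDpos]
        exact haD i
      have h1 : (a i / D) ^ v ≤ (a i / D) ^ ((p i).toReal)⁻¹ :=
        Real.rpow_le_rpow_of_exponent_ge (div_pos (hapos i) hDpos) haiD (htv i)
      have h2 : (a i / D) ^ ((p i).toReal)⁻¹ ≤ a i ^ ((p i).toReal)⁻¹ :=
        Real.rpow_le_rpow (div_nonneg (hapos i).le hDpos.le)
          (div_le_self (hapos i).le hD1) (htnn i)
      exact h1.trans h2
    have hchain : cN * b ^ ((k:ℝ) * v) ≤ ∏ i, a i ^ ((p i).toReal)⁻¹ := by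
      have h1 : ∏ i, (a i / D) ^ v ≤ ∏ i, a i ^ ((p i).toReal)⁻¹ :=
        Finset.prod_le_prod (fun i _ =>
          Real.rpow_nonneg (div_nonneg (hapos i).le hDpos.le) v) (fun i _ => hfac i)
      have h2 : ∏ i, (a i / D) ^ v = ((∏ i, a i) / D ^ n) ^ v := by
        rw [Real.finset_prod_rpow _ _ (fun i _ => div_nonneg (hapos i).le hDpos.le) v]
        congr 1
        rw [Finset.prod_div_distrib, Finset.prod_const, Finset.card_univ]
        simp
      have h3 : (((b ^ k / 2 ^ (n * n)) / D ^ n : ℝ)) ^ v ≤ ((∏ i, a i) / D ^ n) ^ v := by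
        apply Real.rpow_le_rpow (div_nonneg (div_nonneg (zpow_pos hbpos k).le
          (by positivity)) (by positivity)) _ hv0
        exact (div_le_div_iff_of_pos_right (by positivity : (0:ℝ) < D ^ n)).mpr hprod_lb
      have h4 : (((b ^ k / 2 ^ (n * n)) / D ^ n : ℝ)) ^ v = cN * b ^ ((k:ℝ) * v) := by
        rw [div_div, div_eq_mul_inv, Real.mul_rpow (zpow_pos hbpos k).le (by positivity),
          ← Real.rpow_intCast b k, ← Real.rpow_mul hbpos.le, hcN]
        ring
      calc cN * b ^ ((k:ℝ) * v) = (((b ^ k / 2 ^ (n * n)) / D ^ n : ℝ)) ^ v := h4.symm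
        _ ≤ ((∏ i, a i) / D ^ n) ^ v := h3
        _ = ∏ i, (a i / D) ^ v := h2.symm
        _ ≤ ∏ i, a i ^ ((p i).toReal)⁻¹ := h1
    have hlow : ENNReal.ofReal (cN * b ^ ((k:ℝ) * v)) ≤ chiNorm p (Bk A Δ k) :=
      le_trans (ENNReal.ofReal_le_ofReal hchain) ha4
    refine le_trans (hchi cN v hcNpos hlow) ?_
    apply ENNReal.ofReal_le_ofReal
    have hx : b ^ (-(k:ℝ) * v) ≤ max (b ^ (-(k:ℝ) / (⨅ i, p i).toReal))
        (b ^ (-(k:ℝ) / (⨆ i, p i).toReal)) := by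
      apply le_max_of_le_left
      rw [div_eq_mul_inv]
    exact mul_le_mul (le_max_right _ _) hx (Real.rpow_nonneg hbpos.le _) hCpos.le
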